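/- Let A be a Z-tensor of order m and dimension n (m ≥ 2) and b ∈ ℝ^n. Suppose the feasible set F = {x ∈ ℝ^n : x ≥ 0, A x^{m-1} − b ≥ 0} is nonempty. Then F has a unique least element x*, i.e., a member x* of F with x* ≤ x componentwise for every x ∈ F, and this x* is a solution of the tensor complementarity problem: x* ≥ 0, A (x*)^{m-1} − b ≥ 0, and ⟨x*, A (x*)^{m-1} − b⟩ = 0. -/

import Mathlib

/-- `(A x^{m-1})_i = ∑_{i₂,…,i_m} a_{i i₂ … i_m} x_{i₂} ⋯ x_{i_m}`. -/
def tApply {n k : ℕ} (A : Fin n → (Fin k → Fin n) → ℝ) (x : Fin n → ℝ) : Fin n → ℝ :=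
  fun i => ∑ j : Fin k → Fin n, A i j * ∏ t, x (j t)

/-- `A` is a Z-tensor: all off-diagonal entries (indices not all equal) are nonpositive. -/
def IsZTensor {n k : ℕ} (A : Fin n → (Fin k → Fin n) → ℝ) : Prop :=
  ∀ i j, ¬ (∀ t, j t = i) → A i j ≤ 0

/-- Key monotonicity: if `0 ≤ z ≤ x` and `z i = x i` then `(A x^{m-1})_i ≤ (A z^{m-1})_i`
for a Z-tensor `A`. -/
lemma zmono {n k : ℕ} {A : Fin n → (Fin k → Fin n) → ℝ} (hA : IsZTensor A)
    {x z : Fin n → ℝ} (hz : ∀ i, 0 ≤ z i) (hzx : ∀ i, z i ≤ x i) {i : Fin n} (hi : z i = x i) :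
    tApply A x i ≤ tApply A z i := by
  unfold tApply
  apply Finset.sum_le_sum
  intro j _
  by_cases hj : ∀ t, j t = i
  · have h : (∏ t, x (j t)) = ∏ t, z (j t) :=
      Finset.prod_congr rfl (fun t _ => by rw [hj t, hi])
    rw [h]
  · have h1 : A i j ≤ 0 := hA i j hj
    have h2 : (∏ t, z (j t)) ≤ ∏ t, x (j t) :=
      Finset.prod_le_prod (fun t _ => hz (j t)) (fun t _ => hzx (j t))
    exact mul_le_mul_of_nonpos_left h2 h1

lemma tApply_continuous {n k : ℕ} (A : Fin n → (Fin k → Fin n) → ℝ) (i : Fin n) :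
    Continuous fun x : Fin n → ℝ => tApply A x i := by
  unfold tApply
  exact continuous_finset_sum _ fun j _ =>
    continuous_const.mul (continuous_finset_prod _ fun t _ => continuous_apply _)

theorem stmt4 {n m : ℕ} (hm : 2 ≤ m) (A : Fin n → (Fin (m - 1) → Fin n) → ℝ)
    (hA : IsZTensor A) (b : Fin n → ℝ)
    (hfeas : ∃ x : Fin n → ℝ, (∀ i, 0 ≤ x i) ∧ ∀ i, b i ≤ tApply A x i) :
    ∃ xs : Fin n → ℝ,
      ((∀ i, 0 ≤ xs i) ∧ (∀ i, b i ≤ tApply A xs i)) ∧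
      (∀ x : Fin n → ℝ, ((∀ i, 0 ≤ x i) ∧ (∀ i, b i ≤ tApply A x i)) → ∀ i, xs i ≤ x i) ∧
      (∀ y : Fin n → ℝ,
        (((∀ i, 0 ≤ y i) ∧ (∀ i, b i ≤ tApply A y i)) ∧
          (∀ x : Fin n → ℝ, ((∀ i, 0 ≤ x i) ∧ (∀ i, b i ≤ tApply A x i)) → ∀ i, y i ≤ x i))
        → y = xs) ∧
      ∑ i, xs i * (tApply A xs i - b i) = 0 := by
  classical
  set Feas : (Fin n → ℝ) → Prop :=
    fun x => (∀ i, 0 ≤ x i) ∧ ∀ i, b i ≤ tApply A x i with hFeasDef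
  -- feasible set is closed under pointwise min
  have minFeas : ∀ x y, Feas x → Feas y → Feas (fun i => min (x i) (y i)) := by
    intro x y hx hy
    refine ⟨fun i => le_min (hx.1 i) (hy.1 i), fun i => ?_⟩
    rcases le_total (x i) (y i) with h | h
    · calc b i ≤ tApply A x i := hx.2 i
        _ ≤ tApply A (fun i => min (x i) (y i)) i :=
          zmono hA (fun j => le_min (hx.1 j) (hy.1 j)) (fun j => min_le_left _ _)
            (min_eq_left h)
    · calc b i ≤ tApply A y i := hy.2 i
        _ ≤ tApply A (fun i => min (x i) (y i)) i :=
          zmono hA (fun j => le_min (hx.1 j) (hy.1 j)) (fun j => min_le_right _ _)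
            (min_eq_right h)
  obtain ⟨x0, hx0⟩ := hfeas
  have hx0F : Feas x0 := hx0
  set S : Fin n → Set ℝ := fun i => (fun x => x i) '' {x | Feas x} with hS
  have hSne : ∀ i, (S i).Nonempty := fun i => ⟨x0 i, x0, hx0F, rfl⟩
  have hSbdd : ∀ i, BddBelow (S i) := by
    intro i; exact ⟨0, by rintro r ⟨x, hx, rfl⟩; exact hx.1 i⟩
  set xs : Fin n → ℝ := fun i => sInf (S i) with hxs
  have hleast : ∀ x, Feas x → ∀ i, xs i ≤ x i := by
    intro x hx i; exact csInf_le (hSbdd i) ⟨x, hx, rfl⟩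
  have hxs0 : ∀ i, 0 ≤ xs i := fun i =>
    le_csInf (hSne i) (by rintro r ⟨x, hx, rfl⟩; exact hx.1 i)
  -- approximation: feasible points close to xs
  have happrox : ∀ ε : ℝ, 0 < ε → ∃ w, Feas w ∧ ∀ i, w i ≤ xs i + ε := by
    intro ε hε
    have hpick : ∀ i : Fin n, ∃ x, Feas x ∧ x i < xs i + ε := by
      intro i
      have hlt : sInf (S i) < xs i + ε := by
        have : xs i < xs i + ε := by linarith
        simpa [hxs] using this
      obtain ⟨r, hr, hrlt⟩ := exists_lt_of_csInf_lt (hSne i) hlt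
      obtain ⟨x, hx, rfl⟩ := hr
      exact ⟨x, hx, hrlt⟩
    choose p hp1 hp2 using hpick
    have key : ∀ s : Finset (Fin n), ∃ w, Feas w ∧ ∀ i ∈ s, w i ≤ p i i := by
      intro s
      induction s using Finset.induction with
      | empty => exact ⟨x0, hx0F, by simp⟩
      | @insert a s ha ih =>
        obtain ⟨w, hw, hws⟩ := ih
        refine ⟨fun i => min (w i) (p a i), minFeas _ _ hw (hp1 a), ?_⟩
        intro i hi
        rcases Finset.mem_insert.mp hi with rfl | hi
        · exact min_le_right _ _
        · exact le_trans (min_le_left _ _) (hws i hi)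
    obtain ⟨w, hw, hws⟩ := key Finset.univ
    exact ⟨w, hw, fun i => le_of_lt (lt_of_le_of_lt (hws i (Finset.mem_univ i)) (hp2 i))⟩
  -- build a sequence converging to xs
  have hseq : ∀ k : ℕ, ∃ w, Feas w ∧ ∀ i, w i ≤ xs i + 1 / (k + 1) := fun k =>
    happrox _ (by positivity)
  choose z hz1 hz2 using hseq
  have htend : Filter.Tendsto z Filter.atTop (nhds xs) := by
    rw [tendsto_pi_nhds]
    intro i
    have h1 : Filter.Tendsto (fun k : ℕ => xs i + 1 / ((k : ℝ) + 1)) Filter.atTop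
        (nhds (xs i)) := by
      have h0 : Filter.Tendsto (fun k : ℕ => 1 / ((k : ℝ) + 1)) Filter.atTop (nhds 0) :=
        tendsto_one_div_add_atTop_nhds_zero_nat
      simpa using (tendsto_const_nhds (x := xs i) (f := Filter.atTop)).add h0
    exact tendsto_of_tendsto_of_tendsto_of_le_of_le tendsto_const_nhds h1
      (fun k => hleast _ (hz1 k) i) (fun k => hz2 k i)
  have hfeasxs : Feas xs := by
    refine ⟨hxs0, fun i => ?_⟩
    have htt : Filter.Tendsto (fun k => tApply A (z k) i) Filter.atTop
        (nhds (tApply A xs i)) := ((tApply_continuous A i).tendsto xs).comp htend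
    exact ge_of_tendsto' htt (fun k => (hz1 k).2 i)
  -- complementarity
  have hcompl : ∀ i, xs i * (tApply A xs i - b i) = 0 := by
    intro i
    rcases eq_or_lt_of_le (hxs0 i) with h0 | hpos
    · rw [← h0, zero_mul]
    · suffices h : tApply A xs i ≤ b i by
        have heq : tApply A xs i = b i := le_antisymm h (hfeasxs.2 i)
        rw [heq, sub_self, mul_zero]
      by_contra hlt
      push_neg at hlt
      set g : ℝ → ℝ := fun δ => tApply A (Function.update xs i (xs i - δ)) i with hg
      have hupd : (fun δ : ℝ => Function.update xs i (xs i - δ)) =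
          fun δ j => if j = i then xs i - δ else xs j := by
        funext δ j; simp [Function.update_apply]
      have hgc : Continuous g := by
        apply (tApply_continuous A i).comp
        rw [hupd]
        refine continuous_pi fun j => ?_
        by_cases h : j = i <;> simp [h] <;> fun_prop
      have hg0 : b i < g 0 := by
        simpa [hg, Function.update_eq_self] using hlt
      have h1 : ∀ᶠ δ in nhdsWithin (0 : ℝ) (Set.Ioi 0), b i < g δ := by
        apply Filter.Eventually.filter_mono nhdsWithin_le_nhds
        exact (isOpen_lt continuous_const hgc).mem_nhds hg0
      have h2 : ∀ᶠ δ in nhdsWithin (0 : ℝ) (Set.Ioi 0), δ < xs i := by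
        apply Filter.Eventually.filter_mono nhdsWithin_le_nhds
        exact Iio_mem_nhds hpos
      have h3 : ∀ᶠ δ in nhdsWithin (0 : ℝ) (Set.Ioi 0), (0 : ℝ) < δ :=
        eventually_mem_nhdsWithin
      obtain ⟨δ, ⟨hgδ, hδlt⟩, hδpos⟩ := ((h1.and h2).and h3).exists
      set w : Fin n → ℝ := Function.update xs i (xs i - δ) with hw
      have hw0 : ∀ j, 0 ≤ w j := by
        intro j
        rw [hw, Function.update_apply]
        by_cases h : j = i <;> simp [h]
        · linarith
        · exact hxs0 j
      have hwle : ∀ j, w j ≤ xs j := by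
        intro j
        rw [hw, Function.update_apply]
        by_cases h : j = i <;> simp [h]
        linarith
      have hwF : Feas w := by
        refine ⟨hw0, fun ℓ => ?_⟩
        by_cases h : ℓ = i
        · subst h; exact le_of_lt hgδ
        · calc b ℓ ≤ tApply A xs ℓ := hfeasxs.2 ℓ
            _ ≤ tApply A w ℓ := zmono hA hw0 hwle (by
              rw [hw, Function.update_apply, if_neg h])
      have := hleast w hwF i
      rw [hw, Function.update_self] at this
      linarith
  refine ⟨xs, hfeasxs, hleast, ?_, Finset.sum_eq_zero fun i _ => hcompl i⟩
  intro y ⟨hyF, hyL⟩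
  funext i
  exact le_antisymm (hyL xs hfeasxs i) (hleast y hyF i)
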